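/- There exists a constant C > 0 (depending on L) such that every gauge field A on B satisfying (τA)(x) = 0 for all x ∈ B obeys ‖dA‖² ≥ C‖A‖², and likewise every gauge field A on B satisfying (τ⁰A)(x) = 0 for all x ∈ B obeys ‖dA‖² ≥ C‖A‖². -/

import Mathlib

open Finset

noncomputable section

/-- Points of the lattice `ℤ³`. -/
abbrev Pt : Type := Fin 3 → ℤ

/-- The standard unit vector `e_μ`. -/
def unitVec (μ : Fin 3) : Pt := fun i => if i = μ then 1 else 0

/-- Membership in the cube `B = {x : |x i| ≤ (L-1)/2}` (for odd `L`). -/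
def inCube (L : ℤ) (x : Pt) : Prop := ∀ i, |x i| ≤ (L - 1) / 2

/-- Shift a point by `k` steps in direction `μ`. -/
def shiftPt (z : Pt) (μ : Fin 3) (k : ℤ) : Pt := fun i => if i = μ then z i + k else z i

/-- The sum of the gauge field `A` along the straight lattice path from `z` to `z + t·e_μ`. -/
def seg (A : Pt → Pt → ℝ) (z : Pt) (μ : Fin 3) (t : ℤ) : ℝ :=
  if 0 ≤ t then ∑ j ∈ Finset.range t.toNat, A (shiftPt z μ (j : ℤ)) (shiftPt z μ ((j : ℤ) + 1))
  else ∑ j ∈ Finset.range (-t).toNat, A (shiftPt z μ (-(j : ℤ))) (shiftPt z μ (-(j : ℤ) - 1))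

/-- The field strength `dA` on the plaquette based at `x`, spanned by `e_μ, e_ν`. -/
def plaq (A : Pt → Pt → ℝ) (x : Pt) (μ ν : Fin 3) : ℝ :=
  A x (x + unitVec μ) + A (x + unitVec μ) (x + unitVec μ + unitVec ν)
    + A (x + unitVec μ + unitVec ν) (x + unitVec ν) + A (x + unitVec ν) x

/-- The corner of the rectilinear path `Γ^π_{yx}` reached after the first `m` coordinate
moves: coordinates `π 0, …, π (m-1)` are already at their final values. -/
def interPt (y x : Pt) (π : Equiv.Perm (Fin 3)) (m : ℕ) : Pt :=
  fun i => if ((π.symm i : Fin 3) : ℕ) < m then x i else y i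

/-- `A(Γ^π_{yx})`: the sum of `A` along the rectilinear path from `y` to `x` which moves
the coordinates to their final values in the order `π 0, π 1, π 2`. -/
def gammaSum (A : Pt → Pt → ℝ) (π : Equiv.Perm (Fin 3)) (y x : Pt) : ℝ :=
  ∑ m : Fin 3, seg A (interPt y x π (m : ℕ)) (π m) (x (π m) - y (π m))

/-- `(τ⁰A)(x) = A(Γ_{0x})`, for the identity ordering of coordinates. -/
def tau0 (A : Pt → Pt → ℝ) (x : Pt) : ℝ := gammaSum A 1 0 x

/-- `(τA)(x) = (1/6) Σ_π A(Γ^π_{0x})`, averaged over the `3! = 6` permutations. -/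
def tau (A : Pt → Pt → ℝ) (x : Pt) : ℝ :=
  (1 / 6) * ∑ π : Equiv.Perm (Fin 3), gammaSum A π 0 x

/-- The cube `B` as a finite set of lattice points. -/
def cubeFin (L : ℤ) : Finset Pt :=
  Fintype.piFinset fun _ : Fin 3 => Finset.Icc (-((L - 1) / 2)) ((L - 1) / 2)

/-- `‖A‖² = Σ_b A(b)²`, summed over the (unordered) nearest-neighbor bonds in `B`. -/
def bondNormSq (L : ℤ) (A : Pt → Pt → ℝ) : ℝ :=
  ∑ x ∈ cubeFin L, ∑ μ : Fin 3,
    if x + unitVec μ ∈ cubeFin L then (A x (x + unitVec μ)) ^ 2 else 0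

/-- `‖dA‖² = Σ_p dA(p)²`, summed over the plaquettes contained in `B`. -/
def curlNormSq (L : ℤ) (A : Pt → Pt → ℝ) : ℝ :=
  ∑ x ∈ cubeFin L, ∑ μ : Fin 3, ∑ ν : Fin 3,
    if μ < ν ∧ x + unitVec μ ∈ cubeFin L ∧ x + unitVec ν ∈ cubeFin L ∧
        x + unitVec μ + unitVec ν ∈ cubeFin L
    then (plaq A x μ ν) ^ 2 else 0

section Aux

variable {A : Pt → Pt → ℝ}

lemma shiftPt_zero (z : Pt) (μ : Fin 3) : shiftPt z μ 0 = z := by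
  funext i; simp [shiftPt]

lemma shiftPt_one (z : Pt) (μ : Fin 3) : shiftPt z μ 1 = z + unitVec μ := by
  funext i; simp only [shiftPt, Pi.add_apply, unitVec]; split_ifs <;> ring

lemma shiftPt_succ (z : Pt) (μ : Fin 3) (t : ℤ) :
    shiftPt z μ (t + 1) = shiftPt z μ t + unitVec μ := by
  funext i; simp only [shiftPt, Pi.add_apply, unitVec]; split_ifs <;> ring

lemma shiftPt_addUnit (z : Pt) (μ ν : Fin 3) (t : ℤ) :
    shiftPt (z + unitVec μ) ν t = shiftPt z ν t + unitVec μ := by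
  funext i; simp only [shiftPt, Pi.add_apply, unitVec]; split_ifs <;> ring

lemma seg_zero (z : Pt) (μ : Fin 3) : seg A z μ 0 = 0 := by
  simp [seg]

lemma seg_succ (hA : ∀ x x', A x x' = - A x' x) (z : Pt) (μ : Fin 3) (t : ℤ) :
    seg A z μ (t + 1) = seg A z μ t + A (shiftPt z μ t) (shiftPt z μ (t + 1)) := by
  rcases le_or_gt 0 t with ht | ht
  · rw [seg, seg, if_pos (by omega), if_pos ht]
    have h1 : (t + 1).toNat = t.toNat + 1 := by omega
    rw [h1, Finset.sum_range_succ]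
    congr 2 <;> push_cast <;> rw [Int.toNat_of_nonneg ht]
  · rcases eq_or_lt_of_le (by omega : t + 1 ≤ 0) with h0 | h0
    · have ht1 : t = -1 := by omega
      subst ht1
      rw [seg, seg, if_pos (by omega), if_neg (by omega)]
      simp [hA (shiftPt z μ (-1)) (shiftPt z μ 0)]
    · rw [seg, seg, if_neg (by omega), if_neg (by omega)]
      have h1 : (-t).toNat = (-(t+1)).toNat + 1 := by omega
      rw [h1, Finset.sum_range_succ]
      have h2 : (((-(t+1)).toNat : ℤ)) = -(t+1) := by omega
      rw [h2]
      have e1 : -(-(t+1)) = t + 1 := by ring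
      rw [e1]
      have e2 : t + 1 - 1 = t := by ring
      rw [e2, hA (shiftPt z μ (t+1)) (shiftPt z μ t)]
      ring

end Aux
lemma mem_cube_iff {L : ℤ} {x : Pt} : x ∈ cubeFin L ↔ ∀ i, |x i| ≤ (L - 1) / 2 := by
  simp [cubeFin, Fintype.mem_piFinset, Finset.mem_Icc, abs_le, and_comm]

lemma mem_cube_between {L : ℤ} {z : Pt} {ν : Fin 3} {t j : ℤ}
    (hz : z ∈ cubeFin L) (ht : shiftPt z ν t ∈ cubeFin L)
    (hj : (0 ≤ j ∧ j ≤ t) ∨ (t ≤ j ∧ j ≤ 0)) : shiftPt z ν j ∈ cubeFin L := by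
  rw [mem_cube_iff] at *
  intro i
  have h1 := hz i
  have h2 := ht i
  have h3 := hz ν
  have h4 := ht ν
  simp only [shiftPt] at *
  by_cases h : i = ν <;> simp [h] at * <;> rw [abs_le] at * <;> omega

lemma mem_cube_mix {L : ℤ} {x y w : Pt} (hx : x ∈ cubeFin L) (hy : y ∈ cubeFin L)
    (hw : ∀ i, w i = 0 ∨ w i = x i ∨ w i = y i) : w ∈ cubeFin L := by
  rw [mem_cube_iff] at *
  intro i
  have h1 := hx i
  have h2 := hy i
  rcases hw i with h | h | h <;> rw [h]
  · simpa using (abs_nonneg (x i)).trans h1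
  · exact h1
  · exact h2
section Comm
variable {A : Pt → Pt → ℝ} {L : ℤ}

lemma comm_seg (hA : ∀ x x', A x x' = - A x' x)
    (hflat : ∀ x (μ ν : Fin 3), x ∈ cubeFin L → x + unitVec μ ∈ cubeFin L →
      x + unitVec ν ∈ cubeFin L → x + unitVec μ + unitVec ν ∈ cubeFin L → plaq A x μ ν = 0)
    (μ ν : Fin 3) (z : Pt) (t : ℤ) (hz : z ∈ cubeFin L) (hz' : z + unitVec μ ∈ cubeFin L)
    (hw : shiftPt z ν t ∈ cubeFin L) (hw' : shiftPt z ν t + unitVec μ ∈ cubeFin L) :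
    A z (z + unitVec μ) + seg A (z + unitVec μ) ν t
      = seg A z ν t + A (shiftPt z ν t) (shiftPt z ν t + unitVec μ) := by
  revert hw hw'
  induction t using Int.induction_on with
  | zero => intro _ _; rw [shiftPt_zero, seg_zero, seg_zero]; ring
  | succ i ih =>
    intro h1 h2
    have m1 : shiftPt z ν (i : ℤ) ∈ cubeFin L :=
      mem_cube_between hz h1 (Or.inl ⟨by positivity, by omega⟩)
    have m2 : shiftPt z ν (i : ℤ) + unitVec μ ∈ cubeFin L := by
      rw [← shiftPt_addUnit]
      rw [← shiftPt_addUnit] at h2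
      exact mem_cube_between hz' h2 (Or.inl ⟨by positivity, by omega⟩)
    have ih' := ih m1 m2
    have s1 := seg_succ hA (z + unitVec μ) ν (i : ℤ)
    have s2 := seg_succ hA z ν (i : ℤ)
    rw [shiftPt_addUnit, shiftPt_addUnit] at s1
    have hstep : shiftPt z ν ((i : ℤ) + 1) = shiftPt z ν (i : ℤ) + unitVec ν :=
      shiftPt_succ z ν (i : ℤ)
    have hp : plaq A (shiftPt z ν (i : ℤ)) μ ν = 0 := by
      apply hflat _ _ _ m1 m2
      · rw [← hstep]; exact h1
      · rw [add_right_comm, ← hstep]; exact h2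
    rw [plaq] at hp
    rw [hstep] at s1 s2 ⊢
    have pe := add_right_comm (shiftPt z ν (i : ℤ)) (unitVec ν) (unitVec μ)
    rw [pe] at s1 ⊢
    have a1 := hA (shiftPt z ν (i : ℤ) + unitVec μ + unitVec ν) (shiftPt z ν (i : ℤ) + unitVec ν)
    have a2 := hA (shiftPt z ν (i : ℤ) + unitVec ν) (shiftPt z ν (i : ℤ))
    linarith [s1, s2, ih', hp, a1, a2]
  | pred i ih =>
    intro h1 h2
    have m1 : shiftPt z ν (-(i : ℤ)) ∈ cubeFin L :=
      mem_cube_between hz h1 (Or.inr ⟨by omega, by omega⟩)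
    have m2 : shiftPt z ν (-(i : ℤ)) + unitVec μ ∈ cubeFin L := by
      rw [← shiftPt_addUnit]
      rw [← shiftPt_addUnit] at h2
      exact mem_cube_between hz' h2 (Or.inr ⟨by omega, by omega⟩)
    have ih' := ih m1 m2
    have e : (-(i : ℤ) - 1) + 1 = -(i : ℤ) := by ring
    have s1 := seg_succ hA (z + unitVec μ) ν (-(i : ℤ) - 1)
    have s2 := seg_succ hA z ν (-(i : ℤ) - 1)
    rw [e] at s1 s2
    rw [shiftPt_addUnit, shiftPt_addUnit] at s1
    have hstep : shiftPt z ν (-(i : ℤ)) = shiftPt z ν (-(i : ℤ) - 1) + unitVec ν := by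
      rw [← shiftPt_succ, e]
    have hp : plaq A (shiftPt z ν (-(i : ℤ) - 1)) μ ν = 0 := by
      apply hflat _ _ _ h1 h2
      · rw [← hstep]; exact m1
      · rw [add_right_comm, ← hstep]; exact m2
    rw [plaq] at hp
    rw [hstep] at s1 s2 ih'
    have pe := add_right_comm (shiftPt z ν (-(i : ℤ) - 1)) (unitVec ν) (unitVec μ)
    rw [pe] at s1 ih'
    have a1 := hA (shiftPt z ν (-(i : ℤ) - 1) + unitVec μ + unitVec ν)
      (shiftPt z ν (-(i : ℤ) - 1) + unitVec ν)
    have a2 := hA (shiftPt z ν (-(i : ℤ) - 1) + unitVec ν) (shiftPt z ν (-(i : ℤ) - 1))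
    linarith [s1, s2, ih', hp, a1, a2]

end Comm
section Grad
variable {A : Pt → Pt → ℝ} {L : ℤ}

lemma fin3_cases (i : Fin 3) : i = 0 ∨ i = 1 ∨ i = 2 := by omega

lemma addUnit_apply (x : Pt) (μ i : Fin 3) :
    (x + unitVec μ) i = if i = μ then x i + 1 else x i := by
  simp only [Pi.add_apply, unitVec]; split_ifs <;> ring

lemma interPt_zero (y x : Pt) (π : Equiv.Perm (Fin 3)) : interPt y x π 0 = y := by
  funext i; simp [interPt]

lemma interPt_three (y x : Pt) (π : Equiv.Perm (Fin 3)) : interPt y x π 3 = x := by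
  funext i; simp [interPt, Fin.is_lt]

lemma interPt_succ0 (x : Pt) (π : Equiv.Perm (Fin 3)) (m : Fin 3) :
    interPt 0 x π ((m : ℕ) + 1) = shiftPt (interPt 0 x π (m : ℕ)) (π m) (x (π m)) := by
  funext i
  by_cases h : i = π m
  · subst h
    simp only [interPt, shiftPt, Equiv.symm_apply_apply, if_pos rfl, lt_irrefl,
      Nat.lt_succ_iff, le_refl, if_true, if_neg (lt_irrefl (m : ℕ))]
    show x (π m) = (0 : Pt) (π m) + x (π m)
    simp
  · have h2 : π.symm i ≠ m := fun hc => h (by rw [← hc, Equiv.apply_symm_apply])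
    have h3 : ((π.symm i : Fin 3) : ℕ) ≠ (m : ℕ) := fun hc => h2 (Fin.ext hc)
    simp only [interPt, shiftPt, if_neg h]
    exact if_congr (by omega) rfl rfl

lemma interPt_addUnit_le (x : Pt) (π : Equiv.Perm (Fin 3)) (μ : Fin 3) (m : ℕ)
    (hm : m ≤ ((π.symm μ : Fin 3) : ℕ)) :
    interPt 0 (x + unitVec μ) π m = interPt 0 x π m := by
  funext i
  simp only [interPt]
  split_ifs with h
  · rw [addUnit_apply, if_neg]
    intro hc; subst hc
    omega
  · rfl

lemma interPt_addUnit_gt (x : Pt) (π : Equiv.Perm (Fin 3)) (μ : Fin 3) (m : ℕ)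
    (hm : ((π.symm μ : Fin 3) : ℕ) < m) :
    interPt 0 (x + unitVec μ) π m = interPt 0 x π m + unitVec μ := by
  funext i
  by_cases h : i = μ
  · subst h
    simp [interPt, Pi.add_apply, addUnit_apply, unitVec, hm]
  · have hxi : (x + unitVec μ) i = x i := by rw [addUnit_apply, if_neg h]
    simp [interPt, Pi.add_apply, unitVec, hxi, h]

lemma gamma_grad (hA : ∀ x x', A x x' = - A x' x)
    (hflat : ∀ x (μ ν : Fin 3), x ∈ cubeFin L → x + unitVec μ ∈ cubeFin L →
      x + unitVec ν ∈ cubeFin L → x + unitVec μ + unitVec ν ∈ cubeFin L → plaq A x μ ν = 0)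
    (π : Equiv.Perm (Fin 3)) (x : Pt) (μ : Fin 3)
    (hx : x ∈ cubeFin L) (hx' : x + unitVec μ ∈ cubeFin L) :
    gammaSum A π 0 (x + unitVec μ) = gammaSum A π 0 x + A x (x + unitVec μ) := by
  have hzero : ∀ i : Fin 3, (0 : Pt) i = 0 := fun _ => rfl
  have memZ : ∀ m : ℕ, interPt 0 x π m ∈ cubeFin L := by
    intro m
    refine mem_cube_mix hx hx fun i => ?_
    simp only [interPt]; split_ifs
    · right; left; rfl
    · left; rfl
  have memZ' : ∀ m : ℕ, ((π.symm μ : Fin 3) : ℕ) < m →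
      interPt 0 x π m + unitVec μ ∈ cubeFin L := by
    intro m hm
    refine mem_cube_mix hx hx' fun i => ?_
    rw [addUnit_apply]
    by_cases h : i = μ
    · subst h
      simp only [interPt, if_pos hm, if_pos rfl]
      right; right; simp [addUnit_apply, unitVec]
    · rw [if_neg h]
      simp only [interPt]; split_ifs
      · right; left; rfl
      · left; rfl
  have hπμ : π (π.symm μ) = μ := π.apply_symm_apply μ
  -- the commutation step for m with π.symm μ < m
  have step : ∀ m : Fin 3, ((π.symm μ : Fin 3) : ℕ) < (m : ℕ) →
      A (interPt 0 x π (m : ℕ)) (interPt 0 x π (m : ℕ) + unitVec μ)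
        + seg A (interPt 0 x π (m : ℕ) + unitVec μ) (π m) (x (π m))
      = seg A (interPt 0 x π (m : ℕ)) (π m) (x (π m))
        + A (interPt 0 x π ((m : ℕ) + 1)) (interPt 0 x π ((m : ℕ) + 1) + unitVec μ) := by
    intro m hm
    rw [interPt_succ0]
    exact comm_seg hA hflat μ (π m) _ _ (memZ _) (memZ' _ hm)
      (by rw [← interPt_succ0]; exact memZ _)
      (by rw [← interPt_succ0]; exact memZ' _ (by omega))
  -- the segment-extension step at m = π.symm μ
  have step0 : seg A (interPt 0 x π ((π.symm μ : Fin 3) : ℕ)) μ (x μ + 1)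
      = seg A (interPt 0 x π ((π.symm μ : Fin 3) : ℕ)) μ (x μ)
        + A (interPt 0 x π (((π.symm μ : Fin 3) : ℕ) + 1))
            (interPt 0 x π (((π.symm μ : Fin 3) : ℕ) + 1) + unitVec μ) := by
    have e : interPt 0 x π (((π.symm μ : Fin 3) : ℕ) + 1)
        = shiftPt (interPt 0 x π ((π.symm μ : Fin 3) : ℕ)) μ (x μ) := by
      have := interPt_succ0 x π (π.symm μ)
      rwa [hπμ] at this
    rw [seg_succ hA, e, shiftPt_succ]
  have hlen : ∀ m : Fin 3, m ≠ π.symm μ → (x + unitVec μ) (π m) = x (π m) := by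
    intro m hm
    rw [addUnit_apply, if_neg]
    intro hc
    exact hm (by rw [← hc]; exact (Equiv.symm_apply_apply π m).symm)
  have hlenk : (x + unitVec μ) μ = x μ + 1 := by rw [addUnit_apply, if_pos rfl]
  have h3 : interPt 0 x π (2 + 1) = x := interPt_three 0 x π
  rw [gammaSum, gammaSum, Fin.sum_univ_three, Fin.sum_univ_three]
  simp only [hzero, sub_zero]
  rcases fin3_cases (π.symm μ) with hk | hk | hk
  · -- k = 0 : π 0 = μ
    have hπ0 : π 0 = μ := by rw [← hk]; exact hπμ
    have l1 : (x + unitVec μ) (π 0) = x μ + 1 := by rw [hπ0, hlenk]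
    have l2 := hlen 1 (by rw [hk]; decide)
    have l3 := hlen 2 (by rw [hk]; decide)
    have b0 := interPt_addUnit_le x π μ 0 (by omega)
    have b1 := interPt_addUnit_gt x π μ 1 (by rw [hk]; decide)
    have b2 := interPt_addUnit_gt x π μ 2 (by rw [hk]; decide)
    have s0 := step0
    rw [hk] at s0
    have s1 := step 1 (by rw [hk]; decide)
    have s2 := step 2 (by rw [hk]; decide)
    simp only [Fin.val_zero, Fin.val_one, Fin.val_two] at s0 s1 s2 b0 b1 b2 ⊢
    rw [l1, l2, l3, b0, b1, b2, hπ0]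
    norm_num at s0 s1 s2 ⊢
    rw [h3] at s2
    linarith [s0, s1, s2]
  · -- k = 1 : π 1 = μ
    have hπ1 : π 1 = μ := by rw [← hk]; exact hπμ
    have l1 := hlen 0 (by rw [hk]; decide)
    have l2 : (x + unitVec μ) (π 1) = x μ + 1 := by rw [hπ1, hlenk]
    have l3 := hlen 2 (by rw [hk]; decide)
    have b0 := interPt_addUnit_le x π μ 0 (by omega)
    have b1 := interPt_addUnit_le x π μ 1 (by rw [hk]; decide)
    have b2 := interPt_addUnit_gt x π μ 2 (by rw [hk]; decide)
    have s0 := step0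
    rw [hk] at s0
    have s2 := step 2 (by rw [hk]; decide)
    simp only [Fin.val_zero, Fin.val_one, Fin.val_two] at s0 s2 b0 b1 b2 ⊢
    rw [l1, l2, l3, b0, b1, b2, hπ1]
    norm_num at s0 s2 ⊢
    rw [h3] at s2
    linarith [s0, s2]
  · -- k = 2 : π 2 = μ
    have hπ2 : π 2 = μ := by rw [← hk]; exact hπμ
    have l1 := hlen 0 (by rw [hk]; decide)
    have l2 := hlen 1 (by rw [hk]; decide)
    have l3 : (x + unitVec μ) (π 2) = x μ + 1 := by rw [hπ2, hlenk]
    have b0 := interPt_addUnit_le x π μ 0 (by omega)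
    have b1 := interPt_addUnit_le x π μ 1 (by rw [hk]; decide)
    have b2 := interPt_addUnit_le x π μ 2 (by rw [hk]; decide)
    have s0 := step0
    rw [hk] at s0
    simp only [Fin.val_zero, Fin.val_one, Fin.val_two] at s0 b0 b1 b2 ⊢
    rw [l1, l2, l3, b0, b1, b2, hπ2]
    norm_num at s0 ⊢
    rw [h3] at s0
    linarith [s0]

end Grad
section Lin
variable {L : ℤ}

lemma seg_add (A B : Pt → Pt → ℝ) (z : Pt) (μ : Fin 3) (t : ℤ) :
    seg (A + B) z μ t = seg A z μ t + seg B z μ t := by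
  rw [seg, seg, seg]; split_ifs <;> rw [← Finset.sum_add_distrib] <;> rfl

lemma seg_smul (c : ℝ) (A : Pt → Pt → ℝ) (z : Pt) (μ : Fin 3) (t : ℤ) :
    seg (c • A) z μ t = c * seg A z μ t := by
  rw [seg, seg]; split_ifs <;> rw [Finset.mul_sum] <;> rfl

lemma gammaSum_add (A B : Pt → Pt → ℝ) (π : Equiv.Perm (Fin 3)) (y x : Pt) :
    gammaSum (A + B) π y x = gammaSum A π y x + gammaSum B π y x := by
  simp [gammaSum, seg_add, Finset.sum_add_distrib]

lemma gammaSum_smul (c : ℝ) (A : Pt → Pt → ℝ) (π : Equiv.Perm (Fin 3)) (y x : Pt) :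
    gammaSum (c • A) π y x = c * gammaSum A π y x := by
  simp [gammaSum, seg_smul, Finset.mul_sum]

lemma tau_add (A B : Pt → Pt → ℝ) (x : Pt) : tau (A + B) x = tau A x + tau B x := by
  simp [tau, gammaSum_add, Finset.sum_add_distrib]; ring

lemma tau_smul (c : ℝ) (A : Pt → Pt → ℝ) (x : Pt) : tau (c • A) x = c * tau A x := by
  simp [tau, gammaSum_smul, Finset.mul_sum]
  exact Finset.sum_congr rfl fun _ _ => by ring

lemma tau0_add (A B : Pt → Pt → ℝ) (x : Pt) : tau0 (A + B) x = tau0 A x + tau0 B x := by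
  simp [tau0, gammaSum_add]

lemma tau0_smul (c : ℝ) (A : Pt → Pt → ℝ) (x : Pt) : tau0 (c • A) x = c * tau0 A x := by
  simp [tau0, gammaSum_smul]

lemma plaq_add (A B : Pt → Pt → ℝ) (x : Pt) (μ ν : Fin 3) :
    plaq (A + B) x μ ν = plaq A x μ ν + plaq B x μ ν := by
  simp [plaq]; ring

lemma plaq_smul (c : ℝ) (A : Pt → Pt → ℝ) (x : Pt) (μ ν : Fin 3) :
    plaq (c • A) x μ ν = c * plaq A x μ ν := by
  simp [plaq]; ring

/-- The submodule of antisymmetric gauge fields. -/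
def asymSub : Submodule ℝ (Pt → Pt → ℝ) where
  carrier := {A | ∀ x y, A x y = - A y x}
  add_mem' := by
    intro a b ha hb x y
    show a x y + b x y = -(a y x + b y x)
    rw [ha x y, hb x y]; ring
  zero_mem' := by intro x y; simp
  smul_mem' := by
    intro c a ha x y
    show c * a x y = -(c * a y x)
    rw [ha x y]; ring

/-- Index set for bonds inside the cube. -/
def bondIdx (L : ℤ) : Finset (Pt × Fin 3) :=
  (cubeFin L ×ˢ Finset.univ).filter fun p => p.1 + unitVec p.2 ∈ cubeFin L

/-- Index set for plaquettes inside the cube. -/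
def plaqIdx (L : ℤ) : Finset (Pt × Fin 3 × Fin 3) :=
  (cubeFin L ×ˢ Finset.univ ×ˢ Finset.univ).filter fun p =>
    p.2.1 < p.2.2 ∧ p.1 + unitVec p.2.1 ∈ cubeFin L ∧ p.1 + unitVec p.2.2 ∈ cubeFin L ∧
      p.1 + unitVec p.2.1 + unitVec p.2.2 ∈ cubeFin L

lemma bondNormSq_eq (A : Pt → Pt → ℝ) :
    bondNormSq L A = ∑ b ∈ bondIdx L, (A b.1 (b.1 + unitVec b.2)) ^ 2 := by
  rw [bondNormSq, bondIdx, Finset.sum_filter, Finset.sum_product]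

lemma curlNormSq_eq (A : Pt → Pt → ℝ) :
    curlNormSq L A = ∑ p ∈ plaqIdx L, (plaq A p.1 p.2.1 p.2.2) ^ 2 := by
  rw [curlNormSq, plaqIdx, Finset.sum_filter, Finset.sum_product]
  congr 1; funext x
  rw [Finset.sum_product]

/-- The linear map recording the values of a gauge field on all bonds in the cube. -/
def bondMap (L : ℤ) : (Pt → Pt → ℝ) →ₗ[ℝ] EuclideanSpace ℝ (↥(bondIdx L)) where
  toFun A := WithLp.toLp 2 fun b => A b.1.1 (b.1.1 + unitVec b.1.2)
  map_add' := by intros; rfl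
  map_smul' := by intros; rfl

/-- Plaquette values together with the values of `τ` on the cube. -/
def plaqTauMap (L : ℤ) :
    (Pt → Pt → ℝ) →ₗ[ℝ] EuclideanSpace ℝ (↥(plaqIdx L) ⊕ ↥(cubeFin L)) where
  toFun A := WithLp.toLp 2 (Sum.elim (fun p => plaq A p.1.1 p.1.2.1 p.1.2.2) (fun x => tau A x.1))
  map_add' := by
    intro A B; refine PiLp.ext fun i => ?_
    rcases i with p | x
    · exact plaq_add A B p.1.1 p.1.2.1 p.1.2.2
    · exact tau_add A B x.1
  map_smul' := by
    intro c A; refine PiLp.ext fun i => ?_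
    rcases i with p | x
    · exact plaq_smul c A p.1.1 p.1.2.1 p.1.2.2
    · exact tau_smul c A x.1

/-- Plaquette values together with the values of `τ⁰` on the cube. -/
def plaqTau0Map (L : ℤ) :
    (Pt → Pt → ℝ) →ₗ[ℝ] EuclideanSpace ℝ (↥(plaqIdx L) ⊕ ↥(cubeFin L)) where
  toFun A := WithLp.toLp 2 (Sum.elim (fun p => plaq A p.1.1 p.1.2.1 p.1.2.2) (fun x => tau0 A x.1))
  map_add' := by
    intro A B; refine PiLp.ext fun i => ?_
    rcases i with p | x
    · exact plaq_add A B p.1.1 p.1.2.1 p.1.2.2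
    · exact tau0_add A B x.1
  map_smul' := by
    intro c A; refine PiLp.ext fun i => ?_
    rcases i with p | x
    · exact plaq_smul c A p.1.1 p.1.2.1 p.1.2.2
    · exact tau0_smul c A x.1

end Lin

section Abstract

lemma eucl_normsq {ι : Type*} [Fintype ι] (y : EuclideanSpace ℝ ι) :
    ‖y‖ ^ 2 = ∑ i, (y i) ^ 2 := by
  rw [EuclideanSpace.norm_eq, Real.sq_sqrt (by positivity)]
  simp [sq_abs]

lemma abstract_coercive {V E F : Type*} [AddCommGroup V] [Module ℝ V]
    [NormedAddCommGroup E] [InnerProductSpace ℝ E] [FiniteDimensional ℝ E]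
    [NormedAddCommGroup F] [NormedSpace ℝ F]
    (Φ : V →ₗ[ℝ] E) (g : V →ₗ[ℝ] F) (hker : LinearMap.ker Φ ≤ LinearMap.ker g) :
    ∃ C : ℝ, 0 < C ∧ ∀ v, C * ‖g v‖ ^ 2 ≤ ‖Φ v‖ ^ 2 := by
  classical
  set S := LinearMap.range Φ with hS
  let h₀ : S →ₗ[ℝ] F := ((LinearMap.ker Φ).liftQ g hker).comp
    (Φ.quotKerEquivRange.symm : S →ₗ[ℝ] (V ⧸ LinearMap.ker Φ))
  have hfact : ∀ v, h₀ ⟨Φ v, LinearMap.mem_range_self Φ v⟩ = g v := by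
    intro v
    have h1 : Φ.quotKerEquivRange (Submodule.Quotient.mk v)
        = ⟨Φ v, LinearMap.mem_range_self Φ v⟩ :=
      Subtype.ext (Φ.quotKerEquivRange_apply_mk v)
    have : h₀ ⟨Φ v, LinearMap.mem_range_self Φ v⟩
        = ((LinearMap.ker Φ).liftQ g hker) (Submodule.Quotient.mk v) := by
      rw [← h1]
      simp [h₀]
    rw [this, Submodule.liftQ_apply]
  let h₁ : E →L[ℝ] F :=
    (LinearMap.toContinuousLinearMap h₀).comp (S.orthogonalProjectionOnto : E →L[ℝ] S)
  have hgv : ∀ v, g v = h₁ (Φ v) := by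
    intro v
    have hproj : S.orthogonalProjectionOnto (⟨Φ v, LinearMap.mem_range_self Φ v⟩ : S).1
        = ⟨Φ v, LinearMap.mem_range_self Φ v⟩ :=
      Submodule.orthogonalProjectionOnto_mem_subspace_eq_self _
    have : h₁ (Φ v) = h₀ (S.orthogonalProjectionOnto (Φ v)) := rfl
    rw [this]
    rw [show S.orthogonalProjectionOnto (Φ v)
        = (⟨Φ v, LinearMap.mem_range_self Φ v⟩ : S) from hproj]
    exact (hfact v).symm
  refine ⟨1 / (‖h₁‖ ^ 2 + 1), by positivity, fun v => ?_⟩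
  have hb : ‖g v‖ ≤ ‖h₁‖ * ‖Φ v‖ := by rw [hgv v]; exact h₁.le_opNorm _
  have hb2 : ‖g v‖ ^ 2 ≤ ‖h₁‖ ^ 2 * ‖Φ v‖ ^ 2 := by
    nlinarith [norm_nonneg (g v), norm_nonneg (Φ v), norm_nonneg h₁]
  rw [div_mul_eq_mul_div, div_le_iff₀ (by positivity), one_mul]
  nlinarith [sq_nonneg ‖Φ v‖]

end Abstract
section Final
variable {A : Pt → Pt → ℝ} {L : ℤ}

lemma plaq_anti (hA : ∀ x x', A x x' = - A x' x) (x : Pt) (μ ν : Fin 3) :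
    plaq A x ν μ = - plaq A x μ ν := by
  rw [plaq, plaq, add_right_comm x (unitVec ν) (unitVec μ)]
  linarith [hA x (x + unitVec ν), hA (x + unitVec ν) (x + unitVec μ + unitVec ν),
    hA (x + unitVec μ + unitVec ν) (x + unitVec μ), hA (x + unitVec μ) x]

lemma plaq_diag (hA : ∀ x x', A x x' = - A x' x) (x : Pt) (μ : Fin 3) :
    plaq A x μ μ = 0 := by
  rw [plaq]
  linarith [hA x (x + unitVec μ), hA (x + unitVec μ) (x + unitVec μ + unitVec μ)]

lemma flat_all (hA : ∀ x x', A x x' = - A x' x)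
    (h : ∀ p ∈ plaqIdx L, plaq A p.1 p.2.1 p.2.2 = 0) :
    ∀ x (μ ν : Fin 3), x ∈ cubeFin L → x + unitVec μ ∈ cubeFin L →
      x + unitVec ν ∈ cubeFin L → x + unitVec μ + unitVec ν ∈ cubeFin L →
        plaq A x μ ν = 0 := by
  intro x μ ν hx h1 h2 h3
  rcases lt_trichotomy μ ν with hlt | heq | hgt
  · exact h (x, μ, ν) (by
      rw [plaqIdx, Finset.mem_filter]
      exact ⟨by simp [Finset.mem_product, hx], hlt, h1, h2, h3⟩)
  · rw [heq]; exact plaq_diag hA x ν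
  · rw [plaq_anti hA, h (x, ν, μ) (by
      rw [plaqIdx, Finset.mem_filter]
      refine ⟨by simp [Finset.mem_product, hx], hgt, h2, h1, ?_⟩
      rw [add_right_comm]; exact h3), neg_zero]

lemma tau_grad (hA : ∀ x x', A x x' = - A x' x)
    (h : ∀ p ∈ plaqIdx L, plaq A p.1 p.2.1 p.2.2 = 0) (x : Pt) (μ : Fin 3)
    (hx : x ∈ cubeFin L) (hx' : x + unitVec μ ∈ cubeFin L) :
    tau A (x + unitVec μ) = tau A x + A x (x + unitVec μ) := by
  have hg : ∀ π : Equiv.Perm (Fin 3),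
      gammaSum A π 0 (x + unitVec μ) = gammaSum A π 0 x + A x (x + unitVec μ) :=
    fun π => gamma_grad hA (flat_all hA h) π x μ hx hx'
  have hcard : (Finset.univ : Finset (Equiv.Perm (Fin 3))).card = 6 := by decide
  rw [tau, tau, Finset.sum_congr rfl fun π _ => hg π, Finset.sum_add_distrib,
    Finset.sum_const, hcard]
  push_cast
  ring

lemma tau0_grad (hA : ∀ x x', A x x' = - A x' x)
    (h : ∀ p ∈ plaqIdx L, plaq A p.1 p.2.1 p.2.2 = 0) (x : Pt) (μ : Fin 3)
    (hx : x ∈ cubeFin L) (hx' : x + unitVec μ ∈ cubeFin L) :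
    tau0 A (x + unitVec μ) = tau0 A x + A x (x + unitVec μ) :=
  gamma_grad hA (flat_all hA h) 1 x μ hx hx'

end Final
section Assemble
variable {L : ℤ}

lemma bonds_zero_of {A : Pt → Pt → ℝ} (T : Pt → ℝ)
    (hgrad : ∀ x μ, x ∈ cubeFin L → x + unitVec μ ∈ cubeFin L →
      T (x + unitVec μ) = T x + A x (x + unitVec μ))
    (hT : ∀ x ∈ cubeFin L, T x = 0) :
    ∀ b ∈ bondIdx L, A b.1 (b.1 + unitVec b.2) = 0 := by
  intro b hb
  rw [bondIdx, Finset.mem_filter] at hb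
  obtain ⟨hmem, hb2⟩ := hb
  have hb1 : b.1 ∈ cubeFin L := (Finset.mem_product.1 hmem).1
  have h := hgrad b.1 b.2 hb1 hb2
  rw [hT _ hb1, hT _ hb2] at h
  linarith

lemma bond_nonneg (A : Pt → Pt → ℝ) : 0 ≤ bondNormSq L A := by
  rw [bondNormSq_eq]; positivity

end Assemble
/-- There is a constant `C > 0` (depending on `L`) such that every gauge
field `A` on `B` with `τA = 0` on `B` satisfies `‖dA‖² ≥ C‖A‖²`, and likewise every gauge
field with `τ⁰A = 0` on `B` satisfies `‖dA‖² ≥ C‖A‖²`. -/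
theorem gauge_fixed_coercivity (L : ℤ) (hL3 : 3 ≤ L) (hLodd : Odd L) :
    ∃ C : ℝ, 0 < C ∧ ∀ A : Pt → Pt → ℝ, (∀ x x', A x x' = - A x' x) →
      ((∀ x ∈ cubeFin L, tau A x = 0) → C * bondNormSq L A ≤ curlNormSq L A) ∧
      ((∀ x ∈ cubeFin L, tau0 A x = 0) → C * bondNormSq L A ≤ curlNormSq L A) := by
  classical
  set g := (bondMap L).comp asymSub.subtype with hg
  set Φ₁ := (plaqTauMap L).comp asymSub.subtype with hΦ₁
  set Φ₂ := (plaqTau0Map L).comp asymSub.subtype with hΦ₂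
  have hker₁ : LinearMap.ker Φ₁ ≤ LinearMap.ker g := by
    intro v hv
    rw [LinearMap.mem_ker] at hv ⊢
    have hplaq : ∀ p ∈ plaqIdx L, plaq v.1 p.1 p.2.1 p.2.2 = 0 :=
      fun p hp => congrFun (congrArg WithLp.ofLp hv) (Sum.inl ⟨p, hp⟩)
    have htau : ∀ x ∈ cubeFin L, tau v.1 x = 0 :=
      fun x hx => congrFun (congrArg WithLp.ofLp hv) (Sum.inr ⟨x, hx⟩)
    refine PiLp.ext fun b => ?_
    exact bonds_zero_of (tau v.1) (fun x μ hx hx' => tau_grad v.2 hplaq x μ hx hx')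
      htau b.1 b.2
  have hker₂ : LinearMap.ker Φ₂ ≤ LinearMap.ker g := by
    intro v hv
    rw [LinearMap.mem_ker] at hv ⊢
    have hplaq : ∀ p ∈ plaqIdx L, plaq v.1 p.1 p.2.1 p.2.2 = 0 :=
      fun p hp => congrFun (congrArg WithLp.ofLp hv) (Sum.inl ⟨p, hp⟩)
    have htau : ∀ x ∈ cubeFin L, tau0 v.1 x = 0 :=
      fun x hx => congrFun (congrArg WithLp.ofLp hv) (Sum.inr ⟨x, hx⟩)
    refine PiLp.ext fun b => ?_
    exact bonds_zero_of (tau0 v.1) (fun x μ hx hx' => tau0_grad v.2 hplaq x μ hx hx')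
      htau b.1 b.2
  obtain ⟨C₁, hC₁, h₁⟩ := abstract_coercive Φ₁ g hker₁
  obtain ⟨C₂, hC₂, h₂⟩ := abstract_coercive Φ₂ g hker₂
  refine ⟨min C₁ C₂, lt_min hC₁ hC₂, fun A hA => ?_⟩
  have hAmem : A ∈ asymSub := hA
  set v : asymSub := ⟨A, hAmem⟩ with hv
  have hgnorm : ‖g v‖ ^ 2 = bondNormSq L A := by
    rw [eucl_normsq, bondNormSq_eq]
    exact Finset.sum_coe_sort (bondIdx L) (fun b => (A b.1 (b.1 + unitVec b.2)) ^ 2)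
  constructor
  · intro htau
    have hn : ‖Φ₁ v‖ ^ 2 = curlNormSq L A := by
      rw [eucl_normsq, curlNormSq_eq, Fintype.sum_sum_type]
      have e1 : ∑ p : ↥(plaqIdx L), ((Φ₁ v) (Sum.inl p)) ^ 2
          = ∑ p ∈ plaqIdx L, (plaq A p.1 p.2.1 p.2.2) ^ 2 :=
        Finset.sum_coe_sort (plaqIdx L) (fun p => (plaq A p.1 p.2.1 p.2.2) ^ 2)
      have e2 : ∑ x : ↥(cubeFin L), ((Φ₁ v) (Sum.inr x)) ^ 2 = 0 :=
        Finset.sum_eq_zero fun x _ => by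
          show (tau A x.1) ^ 2 = 0
          rw [htau x.1 x.2]; simp
      rw [e1, e2, add_zero]
    calc min C₁ C₂ * bondNormSq L A ≤ C₁ * bondNormSq L A := by
            apply mul_le_mul_of_nonneg_right (min_le_left _ _) (bond_nonneg A)
      _ = C₁ * ‖g v‖ ^ 2 := by rw [hgnorm]
      _ ≤ ‖Φ₁ v‖ ^ 2 := h₁ v
      _ = curlNormSq L A := hn
  · intro htau
    have hn : ‖Φ₂ v‖ ^ 2 = curlNormSq L A := by
      rw [eucl_normsq, curlNormSq_eq, Fintype.sum_sum_type]
      have e1 : ∑ p : ↥(plaqIdx L), ((Φ₂ v) (Sum.inl p)) ^ 2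
          = ∑ p ∈ plaqIdx L, (plaq A p.1 p.2.1 p.2.2) ^ 2 :=
        Finset.sum_coe_sort (plaqIdx L) (fun p => (plaq A p.1 p.2.1 p.2.2) ^ 2)
      have e2 : ∑ x : ↥(cubeFin L), ((Φ₂ v) (Sum.inr x)) ^ 2 = 0 :=
        Finset.sum_eq_zero fun x _ => by
          show (tau0 A x.1) ^ 2 = 0
          rw [htau x.1 x.2]; simp
      rw [e1, e2, add_zero]
    calc min C₁ C₂ * bondNormSq L A ≤ C₂ * bondNormSq L A := by
            apply mul_le_mul_of_nonneg_right (min_le_right _ _) (bond_nonneg A)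
      _ = C₂ * ‖g v‖ ^ 2 := by rw [hgnorm]
      _ ≤ ‖Φ₂ v‖ ^ 2 := h₂ v
      _ = curlNormSq L A := hn
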